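/- For all λ>0, c>0, t>0, the absolutely continuous part of the planar Markov random flight density has total mass 1 − e^{-λt}: ∫_{‖x‖<ct} (λ/(2πc)) exp(−λt + (λ/c)√(c²t²−‖x‖²))/√(c²t²−‖x‖²) dx = 1 − e^{-λt}, the integral over the open disk of radius ct in ℝ². -/

import Mathlib

open Real MeasureTheory

theorem planar_flight_ac_mass (lam c t : ℝ) (hlam : 0 < lam) (hc : 0 < c) (ht : 0 < t) :
    (∫ x in Metric.ball (0 : EuclideanSpace ℝ (Fin 2)) (c * t),
        (lam / (2 * π * c)) *
          Real.exp (-(lam * t) + (lam / c) * Real.sqrt ((c * t) ^ 2 - ‖x‖ ^ 2)) /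
            Real.sqrt ((c * t) ^ 2 - ‖x‖ ^ 2)) = 1 - Real.exp (-(lam * t)) := by
  have hπ : (0:ℝ) < π := Real.pi_pos
  have hR : 0 < c * t := mul_pos hc ht
  set R : ℝ := c * t with hRdef
  set g : ℝ → ℝ := fun r =>
    (lam / (2 * π * c)) * Real.exp (-(lam * t) + (lam / c) * Real.sqrt (R ^ 2 - r ^ 2)) /
      Real.sqrt (R ^ 2 - r ^ 2) with hgdef
  have hA : 0 < lam / (2 * π * c) := by positivity
  have hg0 : ∀ r : ℝ, R ≤ r → g r = 0 := by
    intro r hr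
    have h1 : R ^ 2 - r ^ 2 ≤ 0 := by nlinarith
    simp [hgdef, Real.sqrt_eq_zero'.mpr h1]
  have hgnonneg : ∀ r : ℝ, 0 ≤ g r := by
    intro r
    rw [hgdef]
    positivity
  have hgmeas : Measurable g := by
    apply Measurable.div
    · exact (measurable_const.mul ((measurable_const.add (measurable_const.mul
        (Real.continuous_sqrt.measurable.comp (measurable_const.sub (measurable_id.pow_const 2))))).exp))
    · exact Real.continuous_sqrt.measurable.comp (measurable_const.sub (measurable_id.pow_const 2))
  -- interval integrability of y * g y
  set C : ℝ := R * (lam / (2 * π * c)) / Real.sqrt R with hCdef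
  have hCpos : 0 < C := by positivity
  have hint : IntervalIntegrable (fun y => y * g y) volume 0 R := by
    rw [intervalIntegrable_iff_integrableOn_Ioc_of_le hR.le]
    have h1 : IntervalIntegrable (fun x : ℝ => x ^ (-(1/2) : ℝ)) volume 0 R :=
      intervalIntegral.intervalIntegrable_rpow' (by norm_num)
    have h2 := h1.comp_sub_left R
    have h3 : IntervalIntegrable (fun x => (R - x) ^ (-(1/2) : ℝ)) volume 0 R := by
      simpa using h2.symm
    have hb : IntegrableOn (fun y => C * (R - y) ^ (-(1/2) : ℝ)) (Set.Ioc 0 R) := by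
      rw [← intervalIntegrable_iff_integrableOn_Ioc_of_le hR.le]
      exact h3.const_mul C
    apply MeasureTheory.Integrable.mono hb ((measurable_id.mul hgmeas).aestronglyMeasurable)
    filter_upwards [ae_restrict_mem measurableSet_Ioc] with y hy
    simp only [Pi.mul_apply, id_eq]
    rcases eq_or_lt_of_le hy.2 with heq | hlt
    · simp only [heq, hg0 R le_rfl, mul_zero, norm_zero]
      positivity
    · have hy1 : 0 < y := hy.1
      have hs2 : 0 < R ^ 2 - y ^ 2 := by nlinarith
      have hspos : 0 < Real.sqrt (R ^ 2 - y ^ 2) := Real.sqrt_pos.mpr hs2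
      have hsqRy : 0 < Real.sqrt (R - y) := Real.sqrt_pos.mpr (by linarith)
      have hsqR : 0 < Real.sqrt R := Real.sqrt_pos.mpr hR
      have hsle : Real.sqrt (R ^ 2 - y ^ 2) ≤ R := by
        nth_rewrite 2 [show R = Real.sqrt (R ^ 2) from (Real.sqrt_sq hR.le).symm]
        exact Real.sqrt_le_sqrt (by nlinarith)
      have hexp : Real.exp (-(lam * t) + lam / c * Real.sqrt (R ^ 2 - y ^ 2)) ≤ 1 := by
        rw [Real.exp_le_one_iff]
        have h4 : lam / c * Real.sqrt (R ^ 2 - y ^ 2) ≤ lam / c * R :=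
          mul_le_mul_of_nonneg_left hsle (by positivity)
        have h5 : lam / c * R = lam * t := by rw [hRdef]; field_simp
        linarith
      have hslow : Real.sqrt (R - y) * Real.sqrt R ≤ Real.sqrt (R ^ 2 - y ^ 2) := by
        rw [← Real.sqrt_mul (by linarith) R]
        exact Real.sqrt_le_sqrt (by nlinarith)
      have hgy : g y ≤ (lam / (2 * π * c)) / (Real.sqrt (R - y) * Real.sqrt R) := by
        rw [hgdef]
        exact div_le_div₀ hA.le (by nlinarith [Real.exp_pos (-(lam * t) + lam / c * Real.sqrt (R ^ 2 - y ^ 2))]) (by positivity) hslow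
      have hrw : (R - y) ^ (-(1/2) : ℝ) = (Real.sqrt (R - y))⁻¹ := by
        rw [Real.rpow_neg (by linarith : (0:ℝ) ≤ R - y), Real.sqrt_eq_rpow]
      rw [Real.norm_eq_abs, Real.norm_eq_abs, abs_of_nonneg (by positivity : (0:ℝ) ≤ y * g y),
        abs_of_nonneg (by rw [hrw]; positivity), hrw]
      calc y * g y ≤ R * ((lam / (2 * π * c)) / (Real.sqrt (R - y) * Real.sqrt R)) := by
            apply mul_le_mul hy.2 hgy (hgnonneg y) hR.le
        _ = C * (Real.sqrt (R - y))⁻¹ := by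
            rw [hCdef]; field_simp
  -- FTC
  set F : ℝ → ℝ := fun r => -(Real.exp (-(lam * t)) / (2 * π)) *
      Real.exp (lam / c * Real.sqrt (R ^ 2 - r ^ 2)) with hFdef
  have hcont : ContinuousOn F (Set.Icc 0 R) := by
    apply Continuous.continuousOn
    fun_prop
  have hderiv : ∀ y ∈ Set.Ioo (0:ℝ) R, HasDerivAt F (y * g y) y := by
    intro y hy
    have hs2 : 0 < R ^ 2 - y ^ 2 := by nlinarith [hy.1, hy.2]
    have hspos : 0 < Real.sqrt (R ^ 2 - y ^ 2) := Real.sqrt_pos.mpr hs2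
    have d1 : HasDerivAt (fun r : ℝ => R ^ 2 - r ^ 2) (-(2 * y)) y := by
      simpa using (hasDerivAt_pow 2 y).const_sub (R ^ 2)
    have d2 : HasDerivAt (fun r : ℝ => Real.sqrt (R ^ 2 - r ^ 2))
        (1 / (2 * Real.sqrt (R ^ 2 - y ^ 2)) * -(2 * y)) y :=
      (Real.hasDerivAt_sqrt hs2.ne').comp y d1
    have d3 : HasDerivAt (fun r : ℝ => lam / c * Real.sqrt (R ^ 2 - r ^ 2))
        (lam / c * (1 / (2 * Real.sqrt (R ^ 2 - y ^ 2)) * -(2 * y))) y := d2.const_mul _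
    have d4 := (d3.exp).const_mul (-(Real.exp (-(lam * t)) / (2 * π)))
    refine d4.congr_deriv (Eq.symm ?_)
    rw [hgdef]
    simp only []
    rw [Real.exp_add]
    field_simp
  have ftc : (∫ y in (0:ℝ)..R, y * g y) = F R - F 0 :=
    intervalIntegral.integral_eq_sub_of_hasDeriv_right_of_le hR.le hcont
      (fun y hy => (hderiv y hy).hasDerivWithinAt) hint
  have hFR : F R = -(Real.exp (-(lam * t)) / (2 * π)) := by
    rw [hFdef]
    simp
  have hF0 : F 0 = -(1 / (2 * π)) := by
    rw [hFdef]
    simp only [ne_eq, zero_pow, sub_zero]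
    rw [show R ^ 2 - (0:ℝ) ^ 2 = R ^ 2 by ring, Real.sqrt_sq hR.le,
      show lam / c * R = lam * t by rw [hRdef]; field_simp]
    have hee : Real.exp (-(lam * t)) * Real.exp (lam * t) = 1 := by
      rw [← Real.exp_add]; simp
    rw [show -(rexp (-(lam * t)) / (2 * π)) * rexp (lam * t)
      = -(rexp (-(lam * t)) * rexp (lam * t) / (2 * π)) by ring, hee]
  -- Step 1: ball integral = full integral
  have step1 : (∫ x in Metric.ball (0 : EuclideanSpace ℝ (Fin 2)) R, g ‖x‖)
      = ∫ x : EuclideanSpace ℝ (Fin 2), g ‖x‖ := by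
    apply setIntegral_eq_integral_of_forall_compl_eq_zero
    intro x hx
    apply hg0
    simpa [Metric.mem_ball, not_lt] using hx
  -- volume of unit ball
  have hvol : (volume (Metric.ball (0 : EuclideanSpace ℝ (Fin 2)) 1)).toReal = π := by
    rw [EuclideanSpace.volume_ball]
    rw [Fintype.card_fin]
    norm_num [Real.Gamma_two, Real.sq_sqrt Real.pi_pos.le, Real.pi_pos.le]
  -- Step 2: spherical coordinates
  have step2 : (∫ x : EuclideanSpace ℝ (Fin 2), g ‖x‖)
      = 2 * (π * ∫ y in Set.Ioi (0:ℝ), y * g y) := by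
    rw [MeasureTheory.integral_fun_norm_addHaar (volume : Measure (EuclideanSpace ℝ (Fin 2))) g]
    simp [finrank_euclideanSpace_fin, hvol, smul_eq_mul, nsmul_eq_mul, pow_one]
    exact Or.inl hvol
  -- Step 3: restrict to interval
  have step3 : (∫ y in Set.Ioi (0:ℝ), y * g y) = ∫ y in (0:ℝ)..R, y * g y := by
    rw [setIntegral_eq_of_subset_of_forall_diff_eq_zero measurableSet_Ioi
      Set.Ioc_subset_Ioi_self (fun y hy => ?_), intervalIntegral.integral_of_le hR.le]
    have hy1 : (0:ℝ) < y := hy.1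
    have hy2 : y ∉ Set.Ioc (0:ℝ) R := hy.2
    have : R < y := by
      by_contra hle
      exact hy2 ⟨hy1, not_lt.mp hle⟩
    simp [hg0 y this.le]
  have key : (∫ x in Metric.ball (0 : EuclideanSpace ℝ (Fin 2)) R, g ‖x‖)
      = 1 - Real.exp (-(lam * t)) := by
    rw [step1, step2, step3, ftc, hFR, hF0]
    field_simp
    ring
  exact key
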